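/- The space H(A₁) is σ-compact. -/

import Mathlib

open Set TopologicalSpace Topology

/-- The Hattori topology τ(A) on ℝ: generated by the Euclidean open sets together with
all sets [x, x+ε) with x ∈ ℝ \ A and ε > 0. -/
def hattori (A : Set ℝ) : TopologicalSpace ℝ :=
  TopologicalSpace.generateFrom
    ({s : Set ℝ | IsOpen s} ∪ {s : Set ℝ | ∃ x ∉ A, ∃ ε > 0, s = Set.Ico x (x + ε)})

/-- `B₁`: the set of left endpoints of the closed intervals appearing in the standard
middle-thirds construction of the Cantor set. -/
def B1 : Set ℝ :=
  {x | ∃ n : ℕ, ∃ c : ℕ → ℝ, (∀ i, c i = 0 ∨ c i = 2) ∧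
    x = ∑ i ∈ Finset.range n, c i / 3 ^ (i + 1)}

/-- `A₁ = ℝ \ B₁`. -/
def A1 : Set ℝ := B1ᶜ

lemma sum_digits_even (n : ℕ) (c : ℕ → ℝ) (h : ∀ i, c i = 0 ∨ c i = 2) :
    ∃ k : ℤ, (∑ i ∈ Finset.range n, c i / 3 ^ (i + 1)) * 3 ^ n = 2 * k := by
  refine ⟨∑ i ∈ Finset.range n, if c i = 2 then 3 ^ (n - 1 - i) else 0, ?_⟩
  rw [Finset.sum_mul]
  push_cast
  rw [Finset.mul_sum]
  refine Finset.sum_congr rfl fun i hi => ?_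
  have hin : i < n := Finset.mem_range.mp hi
  rcases h i with h0 | h2
  · norm_num [h0]
  · rw [h2, if_pos rfl]
    have h3 : (3:ℝ)^n = 3^(i+1) * 3^(n-1-i) := by
      rw [← pow_add]; congr 1; omega
    rw [h3]
    field_simp

lemma geom_bound : ∀ M n : ℕ, n ≤ M →
    ∑ i ∈ Finset.Ico n M, (2:ℝ)/3^(i+1) = 1/3^n - 1/3^M := by
  intro M
  induction M with
  | zero => intro n hn; interval_cases n; simp
  | succ M ih =>
    intro n hn
    rcases Nat.lt_or_ge n (M+1) with h | h
    · have hnM : n ≤ M := by omega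
      rw [Finset.sum_Ico_succ_top hnM, ih n hnM]
      have : (3:ℝ)^(M+1) = 3 * 3^M := by ring
      field_simp
      ring
    · have : n = M + 1 := by omega
      subst this; simp

lemma B1_gap {b : ℝ} (hb : b ∈ B1) : ∃ δ > 0, Ioo (b - δ) b ∩ B1 = ∅ := by
  obtain ⟨n, c, hc, rfl⟩ := hb
  set b := ∑ i ∈ Finset.range n, c i / 3 ^ (i + 1) with hbdef
  refine ⟨1 / 3 ^ n, by positivity, ?_⟩
  by_contra hne
  obtain ⟨b', hb'⟩ := nonempty_iff_ne_empty.mpr hne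
  obtain ⟨⟨hlt1, hlt2⟩, m, c', hc', hb'eq⟩ := hb'
  set M := max n m with hM
  set d : ℕ → ℝ := fun i => if i < m then c' i else 0 with hd
  have hdig : ∀ i, d i = 0 ∨ d i = 2 := by
    intro i; by_cases h : i < m <;> simp [hd, h, hc' i]
  have hb'M : b' = ∑ i ∈ Finset.range M, d i / 3 ^ (i + 1) := by
    rw [hb'eq]
    refine (Finset.sum_subset (Finset.range_subset_range.mpr (le_max_right n m)) ?_).symm.trans ?_ |>.symm
    · intro i _ hi
      have : ¬ i < m := by simpa using hi
      simp [hd, this]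
    · refine Finset.sum_congr rfl fun i hi => ?_
      have : i < m := Finset.mem_range.mp hi
      simp [hd, this]
  set t := ∑ i ∈ Finset.range n, d i / 3 ^ (i + 1) with ht
  set r := ∑ i ∈ Finset.Ico n M, d i / 3 ^ (i + 1) with hr
  have hsplit : b' = t + r := by
    rw [hb'M, ht, hr, Finset.range_eq_Ico, Finset.range_eq_Ico]
    exact (Finset.sum_Ico_consecutive _ (Nat.zero_le n) (le_max_left n m)).symm
  have hr0 : 0 ≤ r := by
    refine Finset.sum_nonneg fun i _ => ?_
    rcases hdig i with h | h <;> rw [h] <;> positivity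
  have hrub : r ≤ 1/3^n - 1/3^M := by
    rw [← geom_bound M n (le_max_left n m), hr]
    refine Finset.sum_le_sum fun i _ => ?_
    have h2 : d i ≤ 2 := by rcases hdig i with h | h <;> simp [h]
    gcongr
  obtain ⟨k, hk⟩ := sum_digits_even n c hc
  obtain ⟨k', hk'⟩ := sum_digits_even n d hdig
  have h3n : (0:ℝ) < 3^n := by positivity
  have h3M : (0:ℝ) < 3^M := by positivity
  have htb : t < b := by
    have : t ≤ b' := by linarith
    linarith
  have hk'k : k' < k := by
    have h2 : (2*(k':ℝ)) < 2*(k:ℝ) := by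
      rw [← hk, ← hk']
      exact mul_lt_mul_of_pos_right htb h3n
    exact_mod_cast (by linarith : ((k':ℤ):ℝ) < ((k:ℤ):ℝ))
  have hkk : ((k':ℝ)) ≤ (k:ℝ) - 1 := by
    have : (k' : ℤ) ≤ k - 1 := by omega
    exact_mod_cast this
  have ht_le : t * 3^n ≤ b * 3^n - 2 := by
    rw [hk, hk']; linarith
  have h3ne : ((3:ℝ)^n) ≠ 0 := ne_of_gt h3n
  have e1 : (b - 1/3^n) * 3^n = b * 3^n - 1 := by
    field_simp
  have e2 : r * 3^n ≤ 1 - 3^n/3^M := by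
    have h := mul_le_mul_of_nonneg_right hrub (le_of_lt h3n)
    have e3 : ((1:ℝ)/3^n - 1/3^M) * 3^n = 1 - 3^n/3^M := by
      field_simp
    rw [e3] at h
    exact h
  have e4 : (0:ℝ) < 3^n/3^M := by positivity
  have e5 : (b - 1/3^n) * 3^n < b' * 3^n := mul_lt_mul_of_pos_right hlt1 h3n
  have e6 : b' * 3^n = t * 3^n + r * 3^n := by rw [hsplit]; ring
  linarith

lemma hattori_nhds {s : Set ℝ} (hs : @IsOpen ℝ (hattori A1) s) :
    ∀ x ∈ s, ∃ ε > 0, Ico x (x + ε) ⊆ s ∧ (x ∈ A1 → Ioo (x - ε) (x + ε) ⊆ s) := by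
  have hs' : TopologicalSpace.GenerateOpen
      ({s : Set ℝ | IsOpen s} ∪ {s : Set ℝ | ∃ x ∉ A1, ∃ ε > 0, s = Set.Ico x (x + ε)}) s := hs
  clear hs
  induction hs' with
  | basic u hu =>
    intro x hx
    rcases hu with hu | ⟨a, ha, ε, hε, rfl⟩
    · have hu' : IsOpen u := hu
      obtain ⟨ε, hε, hball⟩ := Metric.isOpen_iff.mp hu' x hx
      rw [Real.ball_eq_Ioo] at hball
      exact ⟨ε, hε, fun y hy => hball ⟨by linarith [hy.1], hy.2⟩, fun _ => hball⟩
    · obtain ⟨hax, hxa⟩ := hx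
      rcases eq_or_lt_of_le hax with rfl | hlt
      · refine ⟨ε, hε, fun y hy => ⟨hy.1, hy.2⟩, fun hA => absurd hA ha⟩
      · refine ⟨min (x - a) (a + ε - x), by simp [hlt, hxa, sub_pos], ?_, fun _ => ?_⟩
        · intro y hy
          obtain ⟨h1, h2⟩ := hy
          constructor
          · linarith
          · have := min_le_right (x - a) (a + ε - x)
            linarith
        · intro y hy
          obtain ⟨h1, h2⟩ := hy
          have hm1 := min_le_left (x - a) (a + ε - x)
          have hm2 := min_le_right (x - a) (a + ε - x)
          exact ⟨by linarith, by linarith⟩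
  | univ => exact fun x _ => ⟨1, one_pos, subset_univ _, fun _ => subset_univ _⟩
  | inter u v hu hv ihu ihv =>
    intro x hx
    obtain ⟨ε₁, hε₁, hI₁, hO₁⟩ := ihu x hx.1
    obtain ⟨ε₂, hε₂, hI₂, hO₂⟩ := ihv x hx.2
    refine ⟨min ε₁ ε₂, lt_min hε₁ hε₂, ?_, fun hA => ?_⟩
    · intro y hy
      have hm1 := min_le_left ε₁ ε₂
      have hm2 := min_le_right ε₁ ε₂
      exact ⟨hI₁ ⟨hy.1, by linarith [hy.2]⟩, hI₂ ⟨hy.1, by linarith [hy.2]⟩⟩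
    · intro y hy
      have hm1 := min_le_left ε₁ ε₂
      have hm2 := min_le_right ε₁ ε₂
      obtain ⟨h1, h2⟩ := hy
      exact ⟨hO₁ hA ⟨by linarith, by linarith⟩, hO₂ hA ⟨by linarith, by linarith⟩⟩
  | sUnion S hS ih =>
    intro x hx
    obtain ⟨u, huS, hxu⟩ := hx
    obtain ⟨ε, hε, hI, hO⟩ := ih u huS x hxu
    exact ⟨ε, hε, hI.trans (subset_sUnion_of_mem huS),
      fun hA => (hO hA).trans (subset_sUnion_of_mem huS)⟩

lemma isCompact_hattori {K : Set ℝ} (hK : IsCompact K)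
    (h : ∀ b ∈ K, b ∈ B1 → ∃ δ > 0, Ioo (b - δ) b ∩ K = ∅) :
    @IsCompact ℝ (hattori A1) K := by
  have hcont : @ContinuousOn ℝ ℝ _ (hattori A1) id K := by
    intro x hx
    have key : ∀ U ∈ @nhds ℝ (hattori A1) x, U ∈ nhdsWithin x K := by
      intro U hU
      obtain ⟨t, hts, htopen, hxt⟩ := (@mem_nhds_iff ℝ (hattori A1) x U).mp hU
      obtain ⟨ε, hε, hI, hO⟩ := hattori_nhds htopen x hxt
      by_cases hA : x ∈ A1
      · exact mem_nhdsWithin.mpr ⟨Ioo (x - ε) (x + ε), isOpen_Ioo,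
          ⟨by linarith, by linarith⟩, fun y hy => hts (hO hA hy.1)⟩
      · have hB : x ∈ B1 := not_not.mp hA
        obtain ⟨δ, hδ, hgap⟩ := h x hx hB
        refine mem_nhdsWithin.mpr ⟨Ioo (x - δ) (x + ε), isOpen_Ioo,
          ⟨by linarith, by linarith⟩, fun y hy => ?_⟩
        obtain ⟨⟨h1, h2⟩, hyK⟩ := hy
        rcases lt_or_ge y x with hyx | hxy
        · exact absurd (mem_inter (mem_inter h1 hyx) hyK : y ∈ Ioo (x - δ) x ∩ K)
            (by rw [hgap]; exact notMem_empty y)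
        · exact hts (hI ⟨hxy, h2⟩)
    exact (@Filter.tendsto_def ℝ ℝ id (nhdsWithin x K) (@nhds ℝ (hattori A1) x)).mpr key
  have himg := @IsCompact.image_of_continuousOn ℝ ℝ _ (hattori A1) K id hK hcont
  rwa [Set.image_id] at himg

/-- The space H(A₁) is σ-compact. -/
theorem sigmaCompact_hattori_A1 : @SigmaCompactSpace ℝ (hattori A1) := by
  classical
  set G : Set ℝ :=
    {x | ∃ b ∈ B1, ∃ δ > 0, x ∈ Ioo (b - δ) b ∧ Ioo (b - δ) b ∩ B1 = ∅} with hG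
  set F : Set ℝ := Gᶜ with hF
  have hGopen : IsOpen G := by
    refine isOpen_iff_mem_nhds.mpr fun x hx => ?_
    obtain ⟨b, hb, δ, hδ, hxI, hgap⟩ := hx
    exact mem_nhds_iff.mpr ⟨Ioo (b - δ) b, fun y hy => ⟨b, hb, δ, hδ, hy, hgap⟩,
      isOpen_Ioo, hxI⟩
  have hFclosed : IsClosed F := hGopen.isClosed_compl
  -- index type
  let KK : ℕ ⊕ ℚ × ℚ → Set ℝ := Sum.elim
    (fun n => F ∩ Icc (-(n:ℝ)) n)
    (fun p => if Icc (p.1 : ℝ) (p.2 : ℝ) ∩ B1 = ∅ then Icc (p.1 : ℝ) (p.2 : ℝ) else ∅)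
  have hKKcompact : ∀ i, @IsCompact ℝ (hattori A1) (KK i) := by
    rintro (n | p)
    · refine isCompact_hattori (isCompact_Icc.inter_left hFclosed) fun b hb hbB => ?_
      obtain ⟨δ, hδ, hgap⟩ := B1_gap hbB
      refine ⟨δ, hδ, eq_empty_iff_forall_notMem.mpr fun y hy => ?_⟩
      have hyG : y ∈ G := ⟨b, hbB, δ, hδ, hy.1, hgap⟩
      exact hy.2.1 hyG
    · by_cases hc : Icc (p.1 : ℝ) (p.2 : ℝ) ∩ B1 = ∅
      · simp only [KK, Sum.elim_inr, if_pos hc]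
        refine isCompact_hattori isCompact_Icc fun b hb hbB => ?_
        exact absurd (mem_inter hb hbB) (by rw [hc]; exact notMem_empty b)
      · simp only [KK, Sum.elim_inr, if_neg hc]
        exact isCompact_hattori isCompact_empty (by simp)
  have hcover : ∀ x : ℝ, ∃ i, x ∈ KK i := by
    intro x
    by_cases hxF : x ∈ F
    · refine ⟨Sum.inl ⌈|x|⌉₊, hxF, ?_⟩
      have h1 : |x| ≤ (⌈|x|⌉₊ : ℝ) := Nat.le_ceil _
      exact ⟨by cases abs_cases x <;> linarith, by cases abs_cases x <;> linarith⟩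
    · have hxG : x ∈ G := not_not.mp hxF
      obtain ⟨b, hb, δ, hδ, ⟨hx1, hx2⟩, hgap⟩ := hxG
      obtain ⟨q, hq1, hq2⟩ := exists_rat_btwn hx1
      obtain ⟨q', hq'1, hq'2⟩ := exists_rat_btwn hx2
      have hIcc : Icc (q : ℝ) (q' : ℝ) ∩ B1 = ∅ := by
        refine eq_empty_iff_forall_notMem.mpr fun y hy => ?_
        have : y ∈ Ioo (b - δ) b ∩ B1 :=
          ⟨⟨by linarith [hy.1.1], by linarith [hy.1.2]⟩, hy.2⟩
        rw [hgap] at this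
        exact notMem_empty y this
      refine ⟨Sum.inr (q, q'), ?_⟩
      simp only [KK, Sum.elim_inr, if_pos hIcc]
      exact ⟨le_of_lt hq2, le_of_lt hq'1⟩
  -- convert to ℕ-indexed family
  let e : ℕ ≃ (ℕ ⊕ ℚ × ℚ) := (Denumerable.eqv (ℕ ⊕ ℚ × ℚ)).symm
  refine @SigmaCompactSpace.mk ℝ (hattori A1) ⟨fun n => KK (e n), fun n => hKKcompact (e n), ?_⟩
  refine eq_univ_iff_forall.mpr fun x => ?_
  obtain ⟨i, hi⟩ := hcover x
  exact mem_iUnion.mpr ⟨e.symm i, by simpa using hi⟩
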